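/- Let u be a radially symmetric, radially decreasing positive solution of −Δ_p u + u^{r−1} = u^{q−1} in ℝ^N with u(x) → 0 as |x| → ∞, where 1 < p < q < r < Np/(N−p). Then there exists c > 0 such that u(x) ≤ c |x|^{−p/(q−p)} for all x ∈ ℝ^N with |x| ≥ 1. -/

import Mathlib

open Real

/-- decay estimate for radially symmetric, radially decreasing positive
solutions of `−Δ_p u + u^{r−1} = u^{q−1}` vanishing at infinity: `u(x) ≤ c|x|^{−p/(q−p)}`
for `|x| ≥ 1`. In radial form `u(x) = v(|x|)` the equation reads
`(s^{N−1}(−v')^{p−1})' = s^{N−1}(v^{q−1} − v^{r−1})`. -/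
theorem stmt_14 (N : ℕ) (p q r : ℝ) (hN : 2 ≤ N)
    (hp1 : 1 < p) (hpN : p < N) (hpq : p < q) (hqr : q < r)
    (hr : r < (N : ℝ) * p / ((N : ℝ) - p))
    (u : EuclideanSpace ℝ (Fin N) → ℝ) (v v' : ℝ → ℝ)
    (hrad : ∀ x, u x = v ‖x‖)
    (hderiv : ∀ s, 0 < s → HasDerivAt v (v' s) s)
    (hpos : ∀ s, 0 < s → 0 < v s)
    (hdec : ∀ s, 0 < s → v' s ≤ 0)
    (hlim : Filter.Tendsto v Filter.atTop (nhds 0))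
    (hODE : ∀ s, 0 < s →
      HasDerivAt (fun t => t ^ ((N : ℝ) - 1) * (-(v' t)) ^ (p - 1))
        (s ^ ((N : ℝ) - 1) * (v s ^ (q - 1) - v s ^ (r - 1))) s) :
    ∃ c : ℝ, 0 < c ∧ ∀ x : EuclideanSpace ℝ (Fin N), 1 ≤ ‖x‖ →
      u x ≤ c * ‖x‖ ^ (-(p / (q - p))) := by
  have hq1 : 1 < q := hp1.trans hpq
  have hp0 : (0:ℝ) < p - 1 := by linarith
  have hqp : (0:ℝ) < q - p := by linarith
  have hrq : (0:ℝ) < r - q := by linarith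
  have hN1 : (1:ℝ) ≤ (N:ℝ) - 1 := by
    have : (2:ℝ) ≤ (N:ℝ) := by exact_mod_cast hN
    linarith
  -- v is antitone on (0,∞)
  have hvmono : AntitoneOn v (Set.Ioi 0) := by
    apply antitoneOn_of_deriv_nonpos (convex_Ioi 0)
    · exact fun s hs => (hderiv s hs).continuousAt.continuousWithinAt
    · intro s hs
      rw [interior_Ioi] at hs
      exact ((hderiv s hs).differentiableAt).differentiableWithinAt
    · intro s hs
      rw [interior_Ioi] at hs
      rw [(hderiv s hs).deriv]
      exact hdec s hs
  -- choose s₀ ≥ 1 with v s ^ (r-q) ≤ 1/2 for s ≥ s₀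
  obtain ⟨s₀, hs₀1, hs₀⟩ : ∃ s₀ : ℝ, 1 ≤ s₀ ∧ ∀ s, s₀ ≤ s → v s ^ (r - q) ≤ 1/2 := by
    set m : ℝ := (2:ℝ) ^ (-(r-q)⁻¹) with hm
    have hm0 : 0 < m := rpow_pos_of_pos two_pos _
    have hev : ∀ᶠ s in Filter.atTop, v s < m :=
      hlim.eventually (gt_mem_nhds hm0)
    obtain ⟨a, ha⟩ := Filter.eventually_atTop.1 hev
    refine ⟨max a 1, le_max_right _ _, fun s hs => ?_⟩
    have hs1 : (1:ℝ) ≤ s := le_trans (le_max_right a 1) hs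
    have hvs : 0 ≤ v s := (hpos s (by linarith)).le
    have : v s ^ (r - q) ≤ m ^ (r - q) :=
      rpow_le_rpow hvs (ha s (le_trans (le_max_left a 1) hs)).le hrq.le
    refine this.trans_eq ?_
    rw [hm, ← rpow_mul (by norm_num : (0:ℝ) ≤ 2), neg_mul,
      inv_mul_cancel₀ hrq.ne', rpow_neg_one]
    norm_num
  have hs₀0 : (0:ℝ) < s₀ := by linarith
  set w : ℝ → ℝ := fun t => t ^ ((N:ℝ)-1) * (-(v' t)) ^ (p-1) with hw
  have hwnonneg : ∀ t, 0 < t → 0 ≤ w t := fun t ht =>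
    mul_nonneg (rpow_nonneg ht.le _) (rpow_nonneg (neg_nonneg.2 (hdec t ht)) _)
  set B : ℝ := (1/2:ℝ) ^ ((N:ℝ)-1) with hB
  have hB0 : 0 < B := rpow_pos_of_pos (by norm_num) _
  set K : ℝ := B/4 with hKdef
  have hK0 : 0 < K := by positivity
  have key : ∀ σ, 2*s₀ ≤ σ → K * σ * v σ ^ (q-1) ≤ (-(v' σ)) ^ (p-1) := by
    intro σ hσ
    have hs : s₀ ≤ σ/2 := by linarith
    have hs0 : 0 < σ/2 := by linarith
    have hσ0 : 0 < σ := by linarith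
    have hlt : σ/2 < σ := by linarith
    obtain ⟨ξ, hξ, hslope⟩ := exists_hasDerivAt_eq_slope w
      (fun t => t ^ ((N:ℝ)-1) * (v t ^ (q-1) - v t ^ (r-1))) hlt
      (fun t ht => (hODE t (lt_of_lt_of_le hs0 ht.1)).continuousAt.continuousWithinAt)
      (fun t ht => hODE t (lt_trans hs0 ht.1))
    have hξ0 : 0 < ξ := lt_trans hs0 hξ.1
    have hvξ0 : 0 < v ξ := hpos ξ hξ0
    have hvσ0 : 0 < v σ := hpos σ hσ0
    -- bound on v ξ ^ (r-1)
    have hhalf : v ξ ^ (r-1) ≤ v ξ ^ (q-1) * (1/2) := by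
      have : v ξ ^ (r-1) = v ξ ^ (q-1) * v ξ ^ (r-q) := by
        rw [← rpow_add hvξ0]; ring_nf
      rw [this]
      exact mul_le_mul_of_nonneg_left (hs₀ ξ (hs.trans hξ.1.le)) (rpow_nonneg hvξ0.le _)
    have hmonq : v σ ^ (q-1) ≤ v ξ ^ (q-1) :=
      rpow_le_rpow hvσ0.le (hvmono (Set.mem_Ioi.2 hξ0) (Set.mem_Ioi.2 hσ0) hξ.2.le)
        (by linarith)
    have hξpow : (σ/2) ^ ((N:ℝ)-1) ≤ ξ ^ ((N:ℝ)-1) :=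
      rpow_le_rpow hs0.le hξ.1.le (by linarith)
    have hhalfpow : (σ/2) ^ ((N:ℝ)-1) = σ ^ ((N:ℝ)-1) * B := by
      rw [show σ/2 = σ * (1/2) by ring, hB,
        ← mul_rpow hσ0.le (by norm_num : (0:ℝ) ≤ 1/2)]
    -- derivative lower bound
    have hd1 : σ ^ ((N:ℝ)-1) * B * (v σ ^ (q-1) / 2) ≤
        ξ ^ ((N:ℝ)-1) * (v ξ ^ (q-1) - v ξ ^ (r-1)) := by
      apply mul_le_mul (hhalfpow ▸ hξpow) (by linarith) (by positivity)
        (rpow_nonneg hξ0.le _)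
    -- from MVT
    have hslope' : w σ - w (σ/2) = (σ/2) * (ξ ^ ((N:ℝ)-1) * (v ξ ^ (q-1) - v ξ ^ (r-1))) := by
      rw [hslope]
      rw [show σ - σ/2 = σ/2 by ring]
      field_simp
    have h1 : 0 ≤ w (σ/2) := hwnonneg _ hs0
    have h2 : (σ/2) * (σ ^ ((N:ℝ)-1) * B * (v σ ^ (q-1) / 2)) ≤
        (σ/2) * (ξ ^ ((N:ℝ)-1) * (v ξ ^ (q-1) - v ξ ^ (r-1))) :=
      mul_le_mul_of_nonneg_left hd1 hs0.le
    have hwlow : (σ/2) * (σ ^ ((N:ℝ)-1) * B * (v σ ^ (q-1) / 2)) ≤ w σ := by linarith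
    have hσpow : (0:ℝ) < σ ^ ((N:ℝ)-1) := rpow_pos_of_pos hσ0 _
    have hfin : σ ^ ((N:ℝ)-1) * (K * σ * v σ ^ (q-1)) ≤
        σ ^ ((N:ℝ)-1) * (-(v' σ)) ^ (p-1) := by
      calc σ ^ ((N:ℝ)-1) * (K * σ * v σ ^ (q-1))
          = (σ/2) * (σ ^ ((N:ℝ)-1) * B * (v σ ^ (q-1) / 2)) := by rw [hKdef]; ring
        _ ≤ w σ := hwlow
        _ = σ ^ ((N:ℝ)-1) * (-(v' σ)) ^ (p-1) := rfl
    exact le_of_mul_le_mul_left hfin hσpow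
  -- Step D: pointwise gradient lower bound
  set c : ℝ := (p-1)⁻¹ with hc
  have hc0 : 0 < c := by positivity
  set β : ℝ := (q-1)/(p-1) with hβ
  set δ : ℝ := β - 1 with hδ
  have hδ0 : 0 < δ := by
    rw [hδ, hβ]
    rw [lt_sub_iff_add_lt, zero_add, lt_div_iff₀ hp0]
    linarith
  have key2 : ∀ σ, 2*s₀ ≤ σ → K ^ c * σ ^ c * v σ ^ β ≤ -(v' σ) := by
    intro σ hσ
    have hσ0 : 0 < σ := by linarith
    have hX : (0:ℝ) ≤ K * σ * v σ ^ (q-1) := by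
      have := (hpos σ hσ0).le
      positivity
    have h1 : (K * σ * v σ ^ (q-1)) ^ c ≤ ((-(v' σ)) ^ (p-1)) ^ c :=
      rpow_le_rpow hX (key σ hσ) hc0.le
    have hnv : 0 ≤ -(v' σ) := neg_nonneg.2 (hdec σ hσ0)
    have h2 : ((-(v' σ)) ^ (p-1)) ^ c = -(v' σ) := by
      rw [← rpow_mul hnv, mul_inv_cancel₀ hp0.ne', rpow_one]
    have h3 : (K * σ * v σ ^ (q-1)) ^ c = K ^ c * σ ^ c * v σ ^ β := by
      rw [mul_rpow (by positivity) (rpow_nonneg (hpos σ hσ0).le _),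
        mul_rpow hK0.le hσ0.le, ← rpow_mul (hpos σ hσ0).le]
      congr 1
    rw [h2, h3] at h1
    exact h1
  -- Step E: comparison function
  set D : ℝ := δ * K ^ c / (c+1) with hD
  have hD0 : 0 < D := by positivity
  set F : ℝ → ℝ := fun t => v t ^ (-δ) - D * t ^ (c+1) with hF
  have hFd : ∀ t, 0 < t → HasDerivAt F
      (v' t * (-δ) * v t ^ (-δ-1) - D * ((c+1) * t ^ (c+1-1))) t := by
    intro t ht
    exact ((hderiv t ht).rpow_const (Or.inl (hpos t ht).ne')).sub
      ((Real.hasDerivAt_rpow_const (Or.inl ht.ne')).const_mul D)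
  have hFmono : MonotoneOn F (Set.Ici (2*s₀)) := by
    apply monotoneOn_of_deriv_nonneg (convex_Ici _)
    · intro t ht
      have ht0 : 0 < t := lt_of_lt_of_le (by linarith) ht
      exact (hFd t ht0).continuousAt.continuousWithinAt
    · intro t ht
      rw [interior_Ici] at ht
      have ht0 : 0 < t := lt_of_lt_of_le (by linarith) ht.le
      exact (hFd t ht0).differentiableAt.differentiableWithinAt
    · intro t ht
      rw [interior_Ici] at ht
      have ht0 : 0 < t := lt_of_lt_of_le (by linarith) ht.le
      rw [(hFd t ht0).deriv]
      have hvt0 : 0 < v t := hpos t ht0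
      have hkey2 := key2 t ht.le
      have hmul : δ * v t ^ (-δ-1) * (K ^ c * t ^ c * v t ^ β) ≤
          δ * v t ^ (-δ-1) * (-(v' t)) :=
        mul_le_mul_of_nonneg_left hkey2 (by positivity)
      have hsimp : δ * v t ^ (-δ-1) * (K ^ c * t ^ c * v t ^ β) =
          δ * K ^ c * t ^ c := by
        have : v t ^ (-δ-1) * v t ^ β = 1 := by
          rw [← rpow_add hvt0, show -δ-1+β = 0 by rw [hδ]; ring, rpow_zero]
        calc δ * v t ^ (-δ-1) * (K ^ c * t ^ c * v t ^ β)
            = δ * (K ^ c * t ^ c) * (v t ^ (-δ-1) * v t ^ β) := by ring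
          _ = δ * K ^ c * t ^ c := by rw [this]; ring
      have hDc : D * ((c+1) * t ^ (c+1-1)) = δ * K ^ c * t ^ c := by
        rw [hD, show c+1-1 = c by ring]
        field_simp
      rw [hDc]
      rw [hsimp] at hmul
      nlinarith [hmul]
    -- done monotonicity
  -- Step F: lower bound for v^{-δ}
  have hlow : ∀ σ, 4*s₀ ≤ σ → D/2 * σ ^ (c+1) ≤ v σ ^ (-δ) := by
    intro σ hσ
    have hσ0 : (0:ℝ) < σ := by linarith
    have h2s : (0:ℝ) < 2*s₀ := by linarith
    have hF1 : F (2*s₀) ≤ F σ :=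
      hFmono (Set.mem_Ici.2 (by linarith)) (Set.mem_Ici.2 (by linarith)) (by linarith)
    have hg0 : (0:ℝ) < v (2*s₀) ^ (-δ) := rpow_pos_of_pos (hpos _ h2s) _
    have hpow : 2 * (2*s₀) ^ (c+1) ≤ σ ^ (c+1) := by
      have h1 : (4*s₀) ^ (c+1) ≤ σ ^ (c+1) := rpow_le_rpow (by linarith) hσ (by linarith)
      have h2 : (4*s₀ : ℝ) = 2 * (2*s₀) := by ring
      have h3 : ((2:ℝ) * (2*s₀)) ^ (c+1) = 2 ^ (c+1) * (2*s₀) ^ (c+1) :=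
        mul_rpow (by norm_num) (by linarith)
      have h4 : (2:ℝ) ≤ 2 ^ (c+1) := by
        nth_rewrite 1 [show (2:ℝ) = 2 ^ (1:ℝ) by rw [rpow_one]]
        exact rpow_le_rpow_of_exponent_le one_le_two (by linarith)
      have h5 : (0:ℝ) ≤ (2*s₀) ^ (c+1) := rpow_nonneg (by linarith) _
      rw [h2, h3] at h1
      have h6 : 2 * (2*s₀) ^ (c+1) ≤ 2 ^ (c+1) * (2*s₀) ^ (c+1) :=
        mul_le_mul_of_nonneg_right h4 h5
      linarith
    have hFσ : F σ = v σ ^ (-δ) - D * σ ^ (c+1) := rfl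
    have hF2s : F (2*s₀) = v (2*s₀) ^ (-δ) - D * (2*s₀) ^ (c+1) := rfl
    rw [hFσ, hF2s] at hF1
    have h7 : D * (2 * (2*s₀) ^ (c+1)) ≤ D * σ ^ (c+1) :=
      mul_le_mul_of_nonneg_left hpow hD0.le
    linarith
  -- invert
  set e : ℝ := -δ⁻¹ with he
  have he0 : e ≤ 0 := by
    rw [he]
    exact neg_nonpos.2 (by positivity)
  have hδeq : δ = (q-p)/(p-1) := by
    rw [hδ, hβ]
    field_simp
    ring
  have hdecay : ∀ σ, 4*s₀ ≤ σ → v σ ≤ (D/2) ^ e * σ ^ (-(p/(q-p))) := by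
    intro σ hσ
    have hσ0 : (0:ℝ) < σ := by linarith
    have hvσ : 0 < v σ := hpos σ hσ0
    have hL0 : 0 < D/2 * σ ^ (c+1) := by positivity
    have h1 : (v σ ^ (-δ)) ^ e ≤ (D/2 * σ ^ (c+1)) ^ e :=
      rpow_le_rpow_of_nonpos hL0 (hlow σ hσ) he0
    have h2 : (v σ ^ (-δ)) ^ e = v σ := by
      rw [← rpow_mul hvσ.le,
        show -δ * e = 1 by rw [he]; field_simp, rpow_one]
    have hpne : p - 1 ≠ 0 := hp0.ne'
    have hqpne : q - p ≠ 0 := hqp.ne'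
    have hexp : (c+1)*e = -(p/(q-p)) := by
      rw [he, hc, hδeq, inv_div]
      field_simp
      ring
    have h3 : (D/2 * σ ^ (c+1)) ^ e = (D/2) ^ e * σ ^ (-(p/(q-p))) := by
      rw [mul_rpow (by positivity) (rpow_nonneg hσ0.le _), ← rpow_mul hσ0.le, hexp]
    rw [h2, h3] at h1
    exact h1
  refine ⟨max ((D/2) ^ e) (v 1 * (4*s₀) ^ (p/(q-p))), ?_, ?_⟩
  · have : 0 < v 1 * (4*s₀) ^ (p/(q-p)) :=
      mul_pos (hpos 1 one_pos) (rpow_pos_of_pos (by linarith) _)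
    exact lt_max_of_lt_right this
  · intro x hx
    rw [hrad x]
    have ht0 : (0:ℝ) < ‖x‖ := by linarith
    have htpow : (0:ℝ) ≤ ‖x‖ ^ (-(p/(q-p))) := rpow_nonneg ht0.le _
    rcases le_total (4*s₀) ‖x‖ with hcase | hcase
    · exact le_trans (hdecay _ hcase)
        (mul_le_mul_of_nonneg_right (le_max_left _ _) htpow)
    · have hv1 : v ‖x‖ ≤ v 1 := hvmono (Set.mem_Ioi.2 one_pos) (Set.mem_Ioi.2 ht0) hx
      have h4s : (0:ℝ) < 4*s₀ := by linarith
      have hexp : -(p/(q-p)) ≤ 0 := neg_nonpos.2 (by positivity)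
      have htle : (4*s₀) ^ (-(p/(q-p))) ≤ ‖x‖ ^ (-(p/(q-p))) :=
        rpow_le_rpow_of_nonpos ht0 hcase hexp
      have hid : v 1 * (4*s₀) ^ (p/(q-p)) * (4*s₀) ^ (-(p/(q-p))) = v 1 := by
        rw [mul_assoc, ← rpow_add h4s]
        simp
      calc v ‖x‖ ≤ v 1 := hv1
        _ = v 1 * (4*s₀) ^ (p/(q-p)) * (4*s₀) ^ (-(p/(q-p))) := hid.symm
        _ ≤ v 1 * (4*s₀) ^ (p/(q-p)) * ‖x‖ ^ (-(p/(q-p))) :=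
            mul_le_mul_of_nonneg_left htle
              (mul_nonneg (hpos 1 one_pos).le (rpow_nonneg h4s.le _))
        _ ≤ max ((D/2) ^ e) (v 1 * (4*s₀) ^ (p/(q-p))) * ‖x‖ ^ (-(p/(q-p))) :=
            mul_le_mul_of_nonneg_right (le_max_right _ _) htpow
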